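/- arXiv:2301.02920 — 4 statements merged into one kernel-verified Lean document; each statement's English description precedes it below -/
import Mathlib

section
/- Let p be a prime and let G be a nontrivial finite p-group having a unique subgroup of order p. Then G is not a Beauville group. -/
/-- `Σ(x,y)`: the union over all `g ∈ G` of the conjugates
`⟨x⟩^g ∪ ⟨y⟩^g ∪ ⟨xy⟩^g`. -/
def beauvilleSigma {G : Type*} [Group G] (x y : G) : Set G :=
  ⋃ g : G, (fun t => g⁻¹ * t * g) ''
    ((Subgroup.zpowers x : Set G) ∪ (Subgroup.zpowers y : Set G) ∪
      (Subgroup.zpowers (x * y) : Set G))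

/-- A group is a Beauville group if it is 2-generated and admits two generating
pairs whose `Σ`-sets intersect trivially. -/
def IsBeauvilleGroup (G : Type*) [Group G] : Prop :=
  (∃ x y : G, Subgroup.closure {x, y} = ⊤) ∧
  ∃ x₁ y₁ x₂ y₂ : G,
    Subgroup.closure {x₁, y₁} = ⊤ ∧ Subgroup.closure {x₂, y₂} = ⊤ ∧
    beauvilleSigma x₁ y₁ ∩ beauvilleSigma x₂ y₂ = {1}



/-- If `z ≠ 1` in a finite `p`-group, the unique subgroup of order `p` lies in `⟨z⟩`. -/
lemma unique_le_zpowers (p : ℕ) (hp : p.Prime) {G : Type*} [Group G] [Finite G]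
    (hG : IsPGroup p G) (H : Subgroup G)
    (huniq : ∀ K : Subgroup G, Nat.card K = p → K = H)
    {z : G} (hz : z ≠ 1) : H ≤ Subgroup.zpowers z := by
  obtain ⟨k, hk⟩ := hG z
  have hdvd : orderOf z ∣ p ^ k := orderOf_dvd_of_pow_eq_one hk
  obtain ⟨m, hm, hme⟩ := (Nat.dvd_prime_pow hp).mp hdvd
  have hm0 : m ≠ 0 := by
    rintro rfl
    simp only [pow_zero] at hme
    exact hz (orderOf_eq_one_iff.mp hme)
  have hpz : p ∣ orderOf z := hme ▸ dvd_pow_self p hm0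
  set h : G := z ^ (orderOf z / p) with hh
  have hordh : orderOf h = p := by
    rw [hh]
    exact orderOf_pow_orderOf_div (orderOf_pos z).ne' hpz
  have hcard : Nat.card (Subgroup.zpowers h) = p := by
    rw [Nat.card_zpowers, hordh]
  have hH : Subgroup.zpowers h = H := huniq _ hcard
  have hhz : h ∈ Subgroup.zpowers z := hh ▸ Subgroup.pow_mem _ (Subgroup.mem_zpowers z) _
  exact hH ▸ (Subgroup.zpowers_le.mpr hhz)

lemma unique_subset_sigma (p : ℕ) (hp : p.Prime) {G : Type*} [Group G] [Finite G]
    [Nontrivial G] (hG : IsPGroup p G) (H : Subgroup G)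
    (huniq : ∀ K : Subgroup G, Nat.card K = p → K = H)
    {x y : G} (hxy : Subgroup.closure {x, y} = ⊤) :
    (H : Set G) ⊆ beauvilleSigma x y := by
  have key : ∀ a ∈ H, a ∈ Subgroup.zpowers x ∨ a ∈ Subgroup.zpowers y := by
    by_cases hx : x = 1
    · have hy : y ≠ 1 := by
        rintro rfl
        subst hx
        rw [Set.pair_eq_singleton, Subgroup.closure_singleton_one] at hxy
        exact bot_ne_top (α := Subgroup G) hxy
      intro a ha
      exact Or.inr (unique_le_zpowers p hp hG H huniq hy ha)
    · intro a ha
      exact Or.inl (unique_le_zpowers p hp hG H huniq hx ha)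
  intro a ha
  refine Set.mem_iUnion.mpr ⟨1, ⟨a, ?_, by group⟩⟩
  rcases key a ha with h | h
  · exact Or.inl (Or.inl h)
  · exact Or.inl (Or.inr h)

/-- A nontrivial finite `p`-group with a unique subgroup of order `p` is not a
Beauville group. -/
theorem unique_subgroup_order_p_not_beauville (p : ℕ) (hp : p.Prime)
    (G : Type*) [Group G] [Finite G] [Nontrivial G] (hG : IsPGroup p G)
    (huniq : ∃! H : Subgroup G, Nat.card H = p) : ¬ IsBeauvilleGroup G := by
  rintro ⟨-, x₁, y₁, x₂, y₂, h1, h2, hint⟩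
  obtain ⟨H, hHcard, hHuniq⟩ := huniq
  have s1 := unique_subset_sigma p hp hG H hHuniq h1
  have s2 := unique_subset_sigma p hp hG H hHuniq h2
  have hnt : Nontrivial H := Finite.one_lt_card_iff_nontrivial.mp (by rw [hHcard]; exact hp.one_lt)
  obtain ⟨b, hb⟩ := exists_ne (1 : H)
  have hb1 : (b : G) ≠ 1 := fun h' => hb (Subtype.ext h')
  have : (b : G) ∈ beauvilleSigma x₁ y₁ ∩ beauvilleSigma x₂ y₂ := ⟨s1 b.2, s2 b.2⟩
  rw [hint] at this
  exact hb1 this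
end

section
/- For every n ≥ 2, the dihedral group of order 2^n is not a Beauville group. -/
namespace DihedralAux

open DihedralGroup

variable {m : ℕ}

/-- `r a ^ k = r (k • a)` for natural `k`. -/
lemma r_pow (a : ZMod m) (k : ℕ) : (r a : DihedralGroup m) ^ k = r (k • a) := by
  induction k with
  | zero => simp
  | succ k ih =>
    rw [pow_succ, ih, r_mul_r, succ_nsmul]

lemma r_inv (a : ZMod m) : (r a : DihedralGroup m)⁻¹ = r (-a) := rfl

lemma r_zpow (a : ZMod m) (k : ℤ) : (r a : DihedralGroup m) ^ k = r (k • a) := by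
  cases k with
  | ofNat k => simp [r_pow]; ring
  | negSucc k =>
    rw [zpow_negSucc, r_pow, r_inv]
    congr 1
    rw [Int.negSucc_eq, neg_smul]
    congr 1
    exact (natCast_zsmul a (k + 1)).symm

/-- The subgroup of `DihedralGroup m` consisting of rotations `r k` with `k ∈ A`
and reflections `sr l` with `l - j ∈ A`. -/
def mixed (A : AddSubgroup (ZMod m)) (j : ZMod m) : Subgroup (DihedralGroup m) where
  carrier := {g | match g with | .r k => k ∈ A | .sr l => l - j ∈ A}
  one_mem' := by exact A.zero_mem
  mul_mem' := by
    rintro (k | k) (l | l) hk hl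
    · simpa using A.add_mem hk hl
    · show (l - k) - j ∈ A
      have : (l - k) - j = (l - j) - k := by ring
      rw [this]; exact A.sub_mem hl hk
    · show (k + l) - j ∈ A
      have : (k + l) - j = (k - j) + l := by ring
      rw [this]; exact A.add_mem hk hl
    · show l - k ∈ A
      have : l - k = (l - j) - (k - j) := by ring
      rw [this]; exact A.sub_mem hl hk
  inv_mem' := by
    rintro (k | k) hk
    · exact A.neg_mem hk
    · exact hk

/-- The rotation subgroup. -/
def rot (m : ℕ) : Subgroup (DihedralGroup m) where
  carrier := Set.range r
  one_mem' := ⟨0, rfl⟩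
  mul_mem' := by rintro _ _ ⟨a, rfl⟩ ⟨b, rfl⟩; exact ⟨a + b, rfl⟩
  inv_mem' := by rintro _ ⟨a, rfl⟩; exact ⟨-a, rfl⟩

lemma mem_zpowers_r_of_gen {a c : ZMod m}
    (h : (1 : ZMod m) ∈ AddSubgroup.zmultiples a) :
    (r c : DihedralGroup m) ∈ Subgroup.zpowers (r a) := by
  obtain ⟨k, hk⟩ := h
  refine ⟨((ZMod.cast c : ℤ)) * k, ?_⟩
  show (r a : DihedralGroup m) ^ ((ZMod.cast c : ℤ) * k) = r c
  simp only at hk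
  rw [r_zpow, mul_smul, hk, zsmul_one, ZMod.intCast_zmod_cast]

/-- For any generating pair of the dihedral group, every rotation `r c` lies in
`beauvilleSigma x y`. -/
lemma key (x y : DihedralGroup m) (h : Subgroup.closure {x, y} = ⊤) (c : ZMod m) :
    (r c : DihedralGroup m) ∈ beauvilleSigma x y := by
  have mem_sigma : ∀ z : DihedralGroup m,
      z ∈ Subgroup.zpowers x ∨ z ∈ Subgroup.zpowers y ∨ z ∈ Subgroup.zpowers (x * y) →
      z ∈ beauvilleSigma x y := by
    intro z hz
    refine Set.mem_iUnion.2 ⟨1, ⟨z, ?_, by group⟩⟩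
    rcases hz with h | h | h
    · exact Or.inl (Or.inl h)
    · exact Or.inl (Or.inr h)
    · exact Or.inr h
  -- key sub-step: from a generating `mixed` subgroup, extract that `1 ∈ A`.
  have gen_of_top : ∀ (A : AddSubgroup (ZMod m)) (j : ZMod m),
      x ∈ mixed A j → y ∈ mixed A j → (1 : ZMod m) ∈ A := by
    intro A j hx hy
    have : Subgroup.closure ({x, y} : Set (DihedralGroup m)) ≤ mixed A j := by
      rw [Subgroup.closure_le]
      rintro z (rfl | rfl) <;> assumption
    rw [h] at this
    have h1 : (r 1 : DihedralGroup m) ∈ mixed A j := this (Subgroup.mem_top _)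
    exact h1
  match x, y with
  | r a, r b =>
    exfalso
    have : Subgroup.closure ({r a, r b} : Set (DihedralGroup m)) ≤ rot m := by
      rw [Subgroup.closure_le]
      rintro z (rfl | rfl)
      exacts [⟨a, rfl⟩, ⟨b, rfl⟩]
    rw [h] at this
    obtain ⟨t, ht⟩ := this (Subgroup.mem_top (sr 0))
    exact absurd ht (by simp)
  | r a, sr b =>
    have h1 : (1 : ZMod m) ∈ AddSubgroup.zmultiples a :=
      gen_of_top (AddSubgroup.zmultiples a) b
        (AddSubgroup.mem_zmultiples a) (by show b - b ∈ AddSubgroup.zmultiples a; simp)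
    exact mem_sigma _ (Or.inl (mem_zpowers_r_of_gen h1))
  | sr a, r b =>
    have h1 : (1 : ZMod m) ∈ AddSubgroup.zmultiples b :=
      gen_of_top (AddSubgroup.zmultiples b) a
        (by show a - a ∈ AddSubgroup.zmultiples b; simp) (AddSubgroup.mem_zmultiples b)
    exact mem_sigma _ (Or.inr (Or.inl (mem_zpowers_r_of_gen h1)))
  | sr a, sr b =>
    have h1 : (1 : ZMod m) ∈ AddSubgroup.zmultiples (b - a) :=
      gen_of_top (AddSubgroup.zmultiples (b - a)) a
        (by show a - a ∈ AddSubgroup.zmultiples (b - a); simp)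
        (by show b - a ∈ AddSubgroup.zmultiples (b - a); exact AddSubgroup.mem_zmultiples (b - a))
    have := mem_zpowers_r_of_gen (c := c) h1
    rw [← sr_mul_sr a b] at this
    exact mem_sigma _ (Or.inr (Or.inr this))

end DihedralAux

/-- For every `n ≥ 2`, the dihedral group of order `2^n` is not a Beauville
group. -/
theorem dihedral_two_group_not_beauville (n : ℕ) (hn : 2 ≤ n) :
    ¬ IsBeauvilleGroup (DihedralGroup (2 ^ (n - 1))) := by
  rintro ⟨-, x₁, y₁, x₂, y₂, h₁, h₂, hint⟩
  have hm : True := trivial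
  -- the central rotation of order 2
  let m : ℕ := 2 ^ (n - 1)
  have hc : True := trivial
  set c : ZMod m := ((2 ^ (n - 2) : ℕ) : ZMod m) with hcdef
  have hz₁ := DihedralAux.key x₁ y₁ h₁ c
  have hz₂ := DihedralAux.key x₂ y₂ h₂ c
  have : (DihedralGroup.r c : DihedralGroup m) ∈
      beauvilleSigma x₁ y₁ ∩ beauvilleSigma x₂ y₂ := ⟨hz₁, hz₂⟩
  rw [hint] at this
  have hc0 : c ≠ 0 := by
    rw [hcdef, Ne, ZMod.natCast_eq_zero_iff]
    intro hdvd
    have := Nat.le_of_dvd (Nat.pos_of_ne_zero (by positivity)) hdvd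
    have hlt : 2 ^ (n - 2) < 2 ^ (n - 1) :=
      Nat.pow_lt_pow_right one_lt_two (by omega)
    omega
  apply hc0
  have : (DihedralGroup.r c : DihedralGroup m) = DihedralGroup.r 0 := this
  exact DihedralGroup.r.inj this
end

section
/- Let G = ⟨a, b⟩ be a GGS-group acting on the p^n-adic tree with defining vector e = (e_1, …, e_{p^n−1}) ∈ (Z/p^nZ)^{p^n−1}, and let p^{R_0} be the largest power of p dividing all entries e_i. Then the order of a is p^n and the order of b is p^{n−R_0}. -/
/-- The rooted automorphism `a` of the `d`-adic tree (vertices are words over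
the alphabet `ZMod d`), acting as the cycle `(1 2 ⋯ d)` on first-level
vertices. -/
def ggsA (d : ℕ) : Equiv.Perm (List (ZMod d)) where
  toFun w := match w with
    | [] => []
    | u :: t => (u + 1) :: t
  invFun w := match w with
    | [] => []
    | u :: t => (u - 1) :: t
  left_inv w := by cases w <;> simp
  right_inv w := by cases w <;> simp

/-- The underlying function of the directed automorphism `b` with defining
vector `e`, satisfying `ψ(b) = (a^{e_1}, …, a^{e_{d-1}}, b)` (the letter `0`
plays the role of the last letter `d`). -/
def ggsBFun (d : ℕ) (e : ZMod d → ZMod d) : List (ZMod d) → List (ZMod d)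
  | [] => []
  | u :: t => u :: (if u = 0 then ggsBFun d e t else (ggsA d ^ (e u).val) t)

/-- The inverse of `ggsBFun`. -/
def ggsBInv (d : ℕ) (e : ZMod d → ZMod d) : List (ZMod d) → List (ZMod d)
  | [] => []
  | u :: t => u :: (if u = 0 then ggsBInv d e t else ((ggsA d ^ (e u).val)⁻¹) t)

theorem ggsB_left_inv (d : ℕ) (e : ZMod d → ZMod d) :
    ∀ w, ggsBInv d e (ggsBFun d e w) = w := by
  intro w
  induction w with
  | nil => rfl
  | cons u t ih =>
      by_cases hu : u = 0 <;> simp [ggsBFun, ggsBInv, hu, ih]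

theorem ggsB_right_inv (d : ℕ) (e : ZMod d → ZMod d) :
    ∀ w, ggsBFun d e (ggsBInv d e w) = w := by
  intro w
  induction w with
  | nil => rfl
  | cons u t ih =>
      by_cases hu : u = 0 <;> simp [ggsBFun, ggsBInv, hu, ih]

/-- The directed automorphism `b` of the `d`-adic tree with defining vector
`e`, given recursively by `ψ(b) = (a^{e_1}, …, a^{e_{d-1}}, b)`. -/
def ggsB (d : ℕ) (e : ZMod d → ZMod d) : Equiv.Perm (List (ZMod d)) where
  toFun := ggsBFun d e
  invFun := ggsBInv d e
  left_inv := ggsB_left_inv d e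
  right_inv := ggsB_right_inv d e

/-- The GGS-group `G = ⟨a, b⟩` acting on the `d`-adic tree with defining
vector `e`. -/
def ggsGroup (d : ℕ) (e : ZMod d → ZMod d) :
    Subgroup (Equiv.Perm (List (ZMod d))) :=
  Subgroup.closure {ggsA d, ggsB d e}

lemma ggsA_pow_nil (d k : ℕ) : (ggsA d ^ k) ([] : List (ZMod d)) = [] := by
  induction k with
  | zero => rfl
  | succ k ih => rw [pow_succ', Equiv.Perm.mul_apply, ih]; rfl

lemma ggsA_pow_cons (d k : ℕ) (u : ZMod d) (t : List (ZMod d)) :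
    (ggsA d ^ k) (u :: t) = (u + (k : ZMod d)) :: t := by
  induction k with
  | zero => simp
  | succ k ih =>
      rw [pow_succ', Equiv.Perm.mul_apply, ih]
      show (u + (k : ZMod d) + 1) :: t = _
      push_cast
      ring_nf

lemma ggsA_pow_eq_one (d k : ℕ) (h : d ∣ k) : (ggsA d) ^ k = 1 := by
  ext w
  cases w with
  | nil => rw [ggsA_pow_nil]; rfl
  | cons u t =>
      rw [ggsA_pow_cons]
      have : (k : ZMod d) = 0 := (ZMod.natCast_eq_zero_iff k d).mpr h
      simp [this]

lemma ggsB_cons (d : ℕ) (e : ZMod d → ZMod d) (u : ZMod d) (t : List (ZMod d)) :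
    (ggsB d e) (u :: t) = u :: (if u = 0 then (ggsB d e) t
      else (ggsA d ^ (e u).val) t) := rfl

lemma ggsB_pow_nil (d : ℕ) (e : ZMod d → ZMod d) (k : ℕ) :
    (ggsB d e ^ k) ([] : List (ZMod d)) = [] := by
  induction k with
  | zero => rfl
  | succ k ih => rw [pow_succ', Equiv.Perm.mul_apply, ih]; rfl

lemma ggsB_pow_cons (d : ℕ) (e : ZMod d → ZMod d) (k : ℕ) :
    ∀ (u : ZMod d) (t : List (ZMod d)),
      (ggsB d e ^ k) (u :: t) = u :: (if u = 0 then (ggsB d e ^ k) t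
        else (ggsA d ^ (k * (e u).val)) t) := by
  induction k with
  | zero =>
      intro u t
      by_cases hu : u = 0 <;> simp [hu]
  | succ k ih =>
      intro u t
      rw [pow_succ', Equiv.Perm.mul_apply, ih]
      by_cases hu : u = 0
      · simp only [hu, if_true, eq_self_iff_true]
        rw [ggsB_cons, if_pos rfl, Equiv.Perm.mul_apply]
      · simp only [hu, if_false]
        rw [ggsB_cons, if_neg hu, ← Equiv.Perm.mul_apply, ← pow_add]
        have : (e u).val + k * (e u).val = (k + 1) * (e u).val := by ring
        rw [this]

/-- For a GGS-group `G = ⟨a,b⟩` on the `p^n`-adic tree with nonzero defining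
vector `e`, where `p^{R₀}` is the largest power of `p` dividing all entries of
`e`, the order of `a` is `p^n` and the order of `b` is `p^{n-R₀}`. -/
theorem ggs_order_a_and_b (p n : ℕ) (hp : p.Prime) (hn : 1 ≤ n)
    (e : ZMod (p ^ n) → ZMod (p ^ n)) (he0 : e 0 = 0) (hne : ∃ i, e i ≠ 0)
    (R₀ : ℕ) (hdvd : ∀ i, p ^ R₀ ∣ (e i).val)
    (hmax : ∃ i, ¬ p ^ (R₀ + 1) ∣ (e i).val) :
    orderOf (ggsA (p ^ n)) = p ^ n ∧
      orderOf (ggsB (p ^ n) e) = p ^ (n - R₀) := by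
  have hd0 : p ^ n ≠ 0 := pow_ne_zero n hp.pos.ne'
  have : NeZero (p ^ n) := ⟨hd0⟩
  -- witness index
  obtain ⟨i, hi⟩ := hmax
  have hi0 : i ≠ 0 := by
    intro h
    apply hi
    rw [h, he0]
    simp
  set v : ℕ := (e i).val with hv
  have hv0 : v ≠ 0 := by
    intro h
    exact hi (h ▸ Dvd.intro 0 rfl)
  obtain ⟨m, hm⟩ := hdvd i
  have hpm : ¬ p ∣ m := by
    intro h
    obtain ⟨c, hc⟩ := h
    exact hi ⟨c, by rw [hv, hm, hc, pow_succ]; ring⟩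
  have hvlt : v < p ^ n := (e i).val_lt
  have hRn : R₀ < n := by
    have h1 : p ^ R₀ ≤ v := Nat.le_of_dvd (Nat.pos_of_ne_zero hv0) (hdvd i)
    have := lt_of_le_of_lt h1 hvlt
    exact (pow_lt_pow_iff_right₀ hp.one_lt).mp this
  -- order of a
  have ha : orderOf (ggsA (p ^ n)) = p ^ n := by
    have h1 : ggsA (p ^ n) ^ (p ^ n) = 1 := ggsA_pow_eq_one _ _ dvd_rfl
    have h2 : ∀ k : ℕ, ggsA (p ^ n) ^ k = 1 → p ^ n ∣ k := by
      intro k hk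
      have := congrFun (congrArg (fun f : Equiv.Perm (List (ZMod (p ^ n))) => f.toFun) hk)
        [(0 : ZMod (p ^ n))]
      simp only [Equiv.toFun_as_coe] at this
      rw [ggsA_pow_cons] at this
      simp only [zero_add, Equiv.Perm.coe_one, id_eq] at this
      have hc : ((k : ZMod (p ^ n))) = 0 := by
        injection this
      exact (ZMod.natCast_eq_zero_iff k (p ^ n)).mp hc
    exact Nat.dvd_antisymm (orderOf_dvd_of_pow_eq_one h1)
      (h2 _ (pow_orderOf_eq_one _))
  refine ⟨ha, ?_⟩
  -- characterize b ^ k = 1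
  have hbk : ∀ k : ℕ, ggsB (p ^ n) e ^ k = 1 ↔ ∀ u : ZMod (p ^ n), p ^ n ∣ k * (e u).val := by
    intro k
    constructor
    · intro hk u
      by_cases hu : u = 0
      · rw [hu, he0]; simp
      · have := congrFun (congrArg (fun f : Equiv.Perm (List (ZMod (p ^ n))) => f.toFun) hk)
          [u, 0]
        simp only [Equiv.toFun_as_coe, Equiv.Perm.coe_one, id_eq] at this
        rw [ggsB_pow_cons, if_neg hu, ggsA_pow_cons] at this
        have hc : ((k * (e u).val : ℕ) : ZMod (p ^ n)) = 0 := by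
          have := List.cons.injEq u _ u ([(0 : ZMod (p ^ n))]) ▸ this
          simp only [List.cons.injEq, true_and] at this
          have h2 := this.1
          rwa [zero_add] at h2
        exact (ZMod.natCast_eq_zero_iff _ _).mp hc
    · intro h
      refine Equiv.ext fun w => ?_
      simp only [Equiv.Perm.coe_one, id_eq]
      induction w with
      | nil => rw [ggsB_pow_nil]
      | cons u t ih =>
          rw [ggsB_pow_cons]
          by_cases hu : u = 0
          · simp [hu, ih]
          · simp only [hu, if_false]
            rw [ggsA_pow_eq_one _ _ (h u)]
            rfl
  have key : ∀ k : ℕ, ggsB (p ^ n) e ^ k = 1 ↔ p ^ (n - R₀) ∣ k := by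
    intro k
    rw [hbk]
    constructor
    · intro h
      have hi' := h i
      rw [hm] at hi'
      have hsplit : p ^ n = p ^ (n - R₀) * p ^ R₀ := by
        rw [← pow_add, Nat.sub_add_cancel hRn.le]
      rw [hsplit] at hi'
      have : p ^ (n - R₀) ∣ k * m := by
        have h2 : p ^ (n - R₀) * p ^ R₀ ∣ k * m * p ^ R₀ := by
          have : k * (p ^ R₀ * m) = k * m * p ^ R₀ := by ring
          rwa [this] at hi'
        exact (Nat.mul_dvd_mul_iff_right (pow_pos hp.pos R₀)).mp h2
      exact (Nat.Coprime.pow_left _ (hp.coprime_iff_not_dvd.mpr hpm)).dvd_of_dvd_mul_right this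
    · intro h u
      obtain ⟨c, hc⟩ := h
      obtain ⟨m', hm'⟩ := hdvd u
      rw [hc, hm']
      refine ⟨c * m', ?_⟩
      rw [show p ^ n = p ^ (n - R₀) * p ^ R₀ by rw [← pow_add, Nat.sub_add_cancel hRn.le]]
      ring
  exact Nat.dvd_antisymm (orderOf_dvd_of_pow_eq_one ((key _).mpr dvd_rfl))
    ((key _).mp (pow_orderOf_eq_one _))
end

section
/- Let G be a periodic GGS-group acting on the 2^n-adic tree (n ≥ 2) with R_0 = n − 1, i.e., every entry of the defining vector is 0 or 2^{n−1}. Then the fourth level stabiliser St_G(4) is trivial. Moreover, St_G(3) is nontrivial if and only if e_i = e_{2^{n−1}+i} for all i ∈ {1, …, 2^{n−1} − 1}. -/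
/-- The `k`-th level stabiliser of a group of tree automorphisms: the subgroup
of elements fixing every vertex (word) at level `k`. -/
def levelStab {A : Type*} (G : Subgroup (Equiv.Perm (List A))) (k : ℕ) :
    Subgroup G where
  carrier := {g | ∀ w : List A, w.length = k → (g : Equiv.Perm (List A)) w = w}
  one_mem' := by intro w hw; rfl
  mul_mem' := by
    intro g h hg hh w hw
    have : ((g * h : G) : Equiv.Perm (List A)) w
        = (g : Equiv.Perm (List A)) ((h : Equiv.Perm (List A)) w) := rfl
    rw [this, hh w hw, hg w hw]
  inv_mem' := by
    intro g hg w hw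
    have h1 : ((g⁻¹ : G) : Equiv.Perm (List A)) w
        = ((g : Equiv.Perm (List A)))⁻¹ w := rfl
    rw [h1]
    conv_lhs => rw [← hg w hw]
    exact Equiv.symm_apply_apply _ _

section GGSAux
set_option linter.unusedSectionVars false

variable {d : ℕ}

/-! ### Basic application lemmas -/

theorem ggsA_nil : ggsA d [] = [] := rfl

theorem ggsA_cons (x : ZMod d) (w : List (ZMod d)) : ggsA d (x :: w) = (x + 1) :: w := rfl

theorem apow_nil (m : ℕ) : (ggsA d ^ m) ([] : List (ZMod d)) = [] := by
  induction m with
  | zero => rfl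
  | succ m ih => rw [pow_succ, Equiv.Perm.mul_apply, ggsA_nil, ih]

theorem apow_cons (m : ℕ) (x : ZMod d) (w : List (ZMod d)) :
    (ggsA d ^ m) (x :: w) = (x + (m : ZMod d)) :: w := by
  induction m generalizing x with
  | zero => simp
  | succ m ih =>
      rw [pow_succ, Equiv.Perm.mul_apply, ggsA_cons, ih]
      congr 1
      push_cast
      ring

variable (e : ZMod d → ZMod d)

theorem ggsB_apply (w : List (ZMod d)) : ggsB d e w = ggsBFun d e w := rfl

/-- The section of `b` at a first-level vertex. -/
def BSec (x : ZMod d) : Equiv.Perm (List (ZMod d)) :=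
  if x = 0 then ggsB d e else ggsA d ^ (e x).val

theorem bb_nil : ggsB d e [] = [] := rfl

theorem bb_cons (x : ZMod d) (w : List (ZMod d)) :
    ggsB d e (x :: w) = x :: BSec e x w := by
  rw [ggsB_apply]
  show (x :: (if x = 0 then ggsBFun d e w else (ggsA d ^ (e x).val) w)) = _
  unfold BSec
  by_cases h : x = 0 <;> simp [h, ggsB_apply]

theorem bb_single (q : ZMod d) : ggsB d e [q] = [q] := by
  rw [bb_cons]
  unfold BSec
  by_cases h : q = 0 <;> simp [h, bb_nil, apow_nil]

theorem BSec_nil (x : ZMod d) : BSec e x [] = [] := by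
  unfold BSec
  by_cases h : x = 0 <;> simp [h, bb_nil, apow_nil]

theorem BSec_zero (w : List (ZMod d)) : BSec e 0 w = ggsB d e w := by
  unfold BSec; simp

section WithH

variable [NeZero d] (H : ZMod d)

theorem natCast_val_eq (x : ZMod d) : ((x.val : ℕ) : ZMod d) = x := ZMod.natCast_rightInverse x

theorem BSec_single (he0 : e 0 = 0) (x q : ZMod d) : BSec e x [q] = [q + e x] := by
  unfold BSec
  by_cases h : x = 0
  · simp [h, he0, bb_single]
  · rw [if_neg h, apow_cons, natCast_val_eq]

/-- `z = a^{2^{n-1}}`. -/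
def Zp : Equiv.Perm (List (ZMod d)) := ggsA d ^ H.val

theorem Zp_nil : Zp (d := d) H [] = [] := apow_nil _

theorem Zp_cons (x : ZMod d) (w : List (ZMod d)) : Zp H (x :: w) = (x + H) :: w := by
  unfold Zp; rw [apow_cons, natCast_val_eq]

variable (hH0 : H ≠ 0) (hHH : H + H = 0) (he0 : e 0 = 0) (heH : e H = 0)
  (hR : ∀ x, e x = 0 ∨ e x = H)

include hHH in
theorem Zp_sq (w : List (ZMod d)) : Zp H (Zp H w) = w := by
  cases w with
  | nil => rw [Zp_nil, Zp_nil]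
  | cons x t => rw [Zp_cons, Zp_cons, add_assoc, hHH, add_zero]

include hH0 heH in
theorem BSec_H (w : List (ZMod d)) : BSec e H w = w := by
  unfold BSec
  rw [if_neg hH0, heH, ZMod.val_zero, pow_zero, Equiv.Perm.one_apply]

include hHH hR in
theorem bb_invol (w : List (ZMod d)) : ggsB d e (ggsB d e w) = w := by
  induction w with
  | nil => rw [bb_nil, bb_nil]
  | cons x t ih =>
      rw [bb_cons, bb_cons]
      congr 1
      unfold BSec
      by_cases h : x = 0
      · simpa [h] using ih
      · rw [if_neg h]
        rcases hR x with h1 | h1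
        · rw [h1, ZMod.val_zero, pow_zero, Equiv.Perm.one_apply, Equiv.Perm.one_apply]
        · rw [h1]
          exact Zp_sq H hHH t

include hHH hR in
theorem BSec_sq (x : ZMod d) (w : List (ZMod d)) : BSec e x (BSec e x w) = w := by
  unfold BSec
  by_cases h : x = 0
  · simpa [h] using bb_invol e H hHH hR w
  · rw [if_neg h]
    rcases hR x with h1 | h1
    · rw [h1, ZMod.val_zero, pow_zero, Equiv.Perm.one_apply, Equiv.Perm.one_apply]
    · rw [h1]; exact Zp_sq H hHH w

theorem neg_H' {d' : ℕ} {K : ZMod d'} (hK : K + K = 0) : -K = K :=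
  (eq_neg_of_add_eq_zero_left hK).symm

include hH0 hHH heH in
theorem BSec_comm (x : ZMod d) (w : List (ZMod d)) :
    BSec e x (BSec e (x + H) w) = BSec e (x + H) (BSec e x w) := by
  by_cases h0 : x = 0
  · subst h0
    rw [zero_add, BSec_H e H hH0 heH, BSec_H e H hH0 heH]
  · by_cases hH : x = H
    · rw [hH, hHH, BSec_H e H hH0 heH, BSec_H e H hH0 heH]
    · have hxH : x + H ≠ 0 := by
        intro hc
        apply hH
        have hx : x = -H := eq_neg_of_add_eq_zero_left hc
        rw [hx, neg_H' hHH]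
      unfold BSec
      rw [if_neg h0, if_neg hxH]
      rw [← Equiv.Perm.mul_apply, ← Equiv.Perm.mul_apply, pow_mul_comm]

/-- `u = (zb)^2`. -/
def Up : Equiv.Perm (List (ZMod d)) := Zp H * ggsB d e * Zp H * ggsB d e

theorem Up_nil : Up e H [] = [] := by
  unfold Up
  rw [Equiv.Perm.mul_apply, Equiv.Perm.mul_apply, Equiv.Perm.mul_apply,
    bb_nil, Zp_nil, bb_nil, Zp_nil]

include hHH in
theorem Up_cons (x : ZMod d) (w : List (ZMod d)) :
    Up e H (x :: w) = x :: BSec e (x + H) (BSec e x w) := by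
  unfold Up
  rw [Equiv.Perm.mul_apply, Equiv.Perm.mul_apply, Equiv.Perm.mul_apply,
    bb_cons, Zp_cons, bb_cons, Zp_cons, add_assoc, hHH, add_zero]

/-! ### Relations in the dihedral group `⟨z, b⟩` -/

include hHH in
theorem rel_zz : Zp (d := d) H * Zp H = 1 := by
  refine Equiv.ext fun w => ?_
  rw [Equiv.Perm.mul_apply, Equiv.Perm.one_apply]
  exact Zp_sq H hHH w

include hHH hR in
theorem rel_bb : ggsB d e * ggsB d e = 1 := by
  refine Equiv.ext fun w => ?_
  rw [Equiv.Perm.mul_apply, Equiv.Perm.one_apply]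
  exact bb_invol e H hHH hR w

include hH0 hHH heH hR in
theorem rel_uu : Up e H * Up e H = 1 := by
  refine Equiv.ext fun w => ?_
  rw [Equiv.Perm.mul_apply, Equiv.Perm.one_apply]
  cases w with
  | nil => rw [Up_nil, Up_nil]
  | cons x t =>
      rw [Up_cons e H hHH, Up_cons e H hHH]
      congr 1
      rw [BSec_comm e H hH0 hHH heH x (BSec e x t), BSec_sq e H hHH hR,
        BSec_sq e H hHH hR]

include hH0 hHH heH in
theorem rel_uz : Up e H * Zp H = Zp H * Up e H := by
  refine Equiv.ext fun w => ?_
  rw [Equiv.Perm.mul_apply, Equiv.Perm.mul_apply]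
  cases w with
  | nil => simp only [Up_nil, Zp_nil]
  | cons x t =>
      rw [Zp_cons, Up_cons e H hHH, Up_cons e H hHH, Zp_cons, add_assoc, hHH, add_zero]
      rw [BSec_comm e H hH0 hHH heH]

include hH0 hHH heH hR in
theorem rel_ub : Up e H * ggsB d e = ggsB d e * Up e H := by
  refine Equiv.ext fun w => ?_
  rw [Equiv.Perm.mul_apply, Equiv.Perm.mul_apply]
  cases w with
  | nil => simp only [Up_nil, bb_nil]
  | cons x t =>
      rw [bb_cons, Up_cons e H hHH, Up_cons e H hHH, bb_cons]
      congr 1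
      rw [BSec_sq e H hHH hR, ← BSec_comm e H hH0 hHH heH, BSec_sq e H hHH hR]

include hH0 hHH heH hR in
theorem rel_bz : ggsB d e * Zp H = Zp H * (ggsB d e * Up e H) := by
  refine Equiv.ext fun w => ?_
  rw [Equiv.Perm.mul_apply, Equiv.Perm.mul_apply, Equiv.Perm.mul_apply]
  cases w with
  | nil => simp only [Up_nil, bb_nil, Zp_nil]
  | cons x t =>
      rw [Zp_cons, bb_cons, Up_cons e H hHH, bb_cons, Zp_cons]
      congr 1
      rw [← BSec_comm e H hH0 hHH heH, BSec_sq e H hHH hR]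

/-! ### The eight-element dihedral set -/

def D8 (i j k : Bool) : Equiv.Perm (List (ZMod d)) :=
  (cond i (Zp H) 1) * (cond j (ggsB d e) 1) * (cond k (Up e H) 1)

theorem D8_one : D8 e H false false false = 1 := by simp [D8]

include hH0 hHH heH hR in
theorem D8_mul (i j k i' j' k' : Bool) :
    D8 e H i j k * D8 e H i' j' k' =
      D8 e H (xor i i') (xor j j') (xor k (xor k' (j && i'))) := by
  have hzz := rel_zz H hHH
  have hbb := rel_bb e H hHH hR
  have huu := rel_uu e H hH0 hHH heH hR
  have huz := rel_uz e H hH0 hHH heH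
  have hub := rel_ub e H hH0 hHH heH hR
  have hbz := rel_bz e H hH0 hHH heH hR
  have hzz' : ∀ f, Zp H * (Zp H * f) = f := fun f => by rw [← mul_assoc, hzz, one_mul]
  have hbb' : ∀ f, ggsB d e * (ggsB d e * f) = f := fun f => by
    rw [← mul_assoc, hbb, one_mul]
  have huu' : ∀ f, Up e H * (Up e H * f) = f := fun f => by rw [← mul_assoc, huu, one_mul]
  have huz' : ∀ f, Up e H * (Zp H * f) = Zp H * (Up e H * f) := fun f => by
    rw [← mul_assoc, huz, mul_assoc]
  have hub' : ∀ f, Up e H * (ggsB d e * f) = ggsB d e * (Up e H * f) := fun f => by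
    rw [← mul_assoc, hub, mul_assoc]
  have hbz' : ∀ f, ggsB d e * (Zp H * f) = Zp H * (ggsB d e * (Up e H * f)) := fun f => by
    rw [← mul_assoc, hbz, mul_assoc, mul_assoc]
  cases i <;> cases j <;> cases k <;> cases i' <;> cases j' <;> cases k' <;>
    simp only [D8, Bool.false_xor, Bool.true_xor, Bool.xor_false, Bool.xor_true,
      Bool.and_false, Bool.and_true, Bool.true_and, Bool.false_and, Bool.not_true,
      Bool.not_false, cond_true, cond_false, one_mul, mul_one, mul_assoc] <;>
    simp only [hbz, hbz', huz, huz', hub, hub', hzz, hzz', hbb, hbb', huu, huu',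
      one_mul, mul_one, mul_assoc]

include hH0 hHH heH hR in
theorem D8_inv (i j k : Bool) :
    (D8 e H i j k)⁻¹ = D8 e H i j (xor k (i && j)) := by
  apply inv_eq_of_mul_eq_one_right
  rw [D8_mul e H hH0 hHH heH hR]
  cases i <;> cases j <;> cases k <;> simp [D8]

/-- The invariant predicate: first-letter shift plus sections in the
dihedral set. -/
def TP (g : Equiv.Perm (List (ZMod d))) : Prop :=
  g [] = [] ∧ ∃ s : ZMod d, ∀ x : ZMod d, ∃ f : Equiv.Perm (List (ZMod d)),
    (∃ i j k : Bool, f = D8 e H i j k) ∧ ∀ w, g (x :: w) = (x + s) :: f w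

theorem TP_one : TP e H 1 :=
  ⟨rfl, 0, fun _ => ⟨1, ⟨false, false, false, (D8_one e H).symm⟩,
    fun w => by simp⟩⟩

include hH0 hHH heH hR in
theorem TP_mul {g g' : Equiv.Perm (List (ZMod d))} (hg : TP e H g) (hg' : TP e H g') :
    TP e H (g * g') := by
  obtain ⟨hn, s, hs⟩ := hg
  obtain ⟨hn', s', hs'⟩ := hg'
  refine ⟨?_, s' + s, fun x => ?_⟩
  · rw [Equiv.Perm.mul_apply, hn', hn]
  · obtain ⟨f', ⟨i', j', k', rfl⟩, hw'⟩ := hs' x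
    obtain ⟨f, ⟨i, j, k, rfl⟩, hw⟩ := hs (x + s')
    refine ⟨_ * _, ⟨_, _, _, D8_mul e H hH0 hHH heH hR i j k i' j' k'⟩, fun w => ?_⟩
    rw [Equiv.Perm.mul_apply, hw' w, hw, Equiv.Perm.mul_apply, ← add_assoc]

include hH0 hHH heH hR in
theorem TP_inv {g : Equiv.Perm (List (ZMod d))} (hg : TP e H g) : TP e H g⁻¹ := by
  obtain ⟨hn, s, hs⟩ := hg
  refine ⟨?_, -s, fun x => ?_⟩
  · rw [Equiv.Perm.inv_eq_iff_eq, hn]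
  · obtain ⟨f, ⟨i, j, k, rfl⟩, hw⟩ := hs (x + -s)
    refine ⟨_, ⟨_, _, _, D8_inv e H hH0 hHH heH hR i j k⟩, fun w => ?_⟩
    rw [Equiv.Perm.inv_eq_iff_eq, hw, ← Equiv.Perm.mul_apply, mul_inv_cancel, Equiv.Perm.one_apply, neg_add_cancel_right]

/-- The subgroup of permutations satisfying the invariant. -/
def Tgrp : Subgroup (Equiv.Perm (List (ZMod d))) where
  carrier := {g | TP e H g}
  one_mem' := TP_one e H
  mul_mem' := fun hg hg' => TP_mul e H hH0 hHH heH hR hg hg'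
  inv_mem' := fun hg => TP_inv e H hH0 hHH heH hR hg

include hH0 hHH he0 heH hR in
theorem ggs_le_Tgrp : ggsGroup d e ≤ Tgrp e H hH0 hHH heH hR := by
  apply (Subgroup.closure_le _).mpr
  intro f hf
  simp only [Set.mem_insert_iff, Set.mem_singleton_iff] at hf
  rcases hf with rfl | rfl
  · exact ⟨rfl, 1, fun x => ⟨1, ⟨false, false, false, (D8_one e H).symm⟩,
      fun w => by rw [ggsA_cons, Equiv.Perm.one_apply]⟩⟩
  · refine ⟨rfl, 0, fun x => ⟨BSec e x, ?_, fun w => by rw [bb_cons, add_zero]⟩⟩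
    by_cases hx : x = 0
    · refine ⟨false, true, false, ?_⟩
      unfold BSec
      simp [hx, D8]
    · rcases hR x with h1 | h1
      · refine ⟨false, false, false, ?_⟩
        unfold BSec
        rw [if_neg hx, h1, ZMod.val_zero, pow_zero, D8_one e H]
      · refine ⟨true, false, false, ?_⟩
        unfold BSec
        rw [if_neg hx, h1, D8]
        simp [Zp]

/-! ### Triviality criteria for the dihedral sections -/

include hH0 hHH he0 heH hR in
theorem claimA (x₀ : ZMod d) (hx₀ : e x₀ = H) (i j k : Bool)
    (hfix : ∀ w : List (ZMod d), w.length = 3 → D8 e H i j k w = w) :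
    D8 e H i j k = 1 := by
  have hx₀0 : x₀ ≠ 0 := fun hc => hH0 (by rw [← hx₀, hc, he0])
  have hBx₀ : ∀ v, BSec e x₀ v = Zp H v := fun v => by
    unfold BSec; rw [if_neg hx₀0, hx₀]; rfl
  have hbx0 : ggsB d e [x₀, 0] = [x₀, H] := by
    rw [bb_cons, BSec_single e he0, zero_add, hx₀]
  cases i
  · cases j
    · cases k
      · exact D8_one e H
      · exfalso
        have h1 := hfix [0, x₀, 0] rfl
        rw [D8] at h1
        simp only [cond_true, cond_false, one_mul] at h1
        rw [Up_cons e H hHH, BSec_zero, hbx0, zero_add, BSec_H e H hH0 heH] at h1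
        have := (List.cons.injEq _ _ _ _).mp h1
        have h2 := (List.cons.injEq _ _ _ _).mp this.2
        exact hH0 ((List.cons.injEq _ _ _ _).mp h2.2 |>.1)
    · cases k
      · exfalso
        have h1 := hfix [x₀, 0, 0] rfl
        rw [D8] at h1
        simp only [cond_true, cond_false, one_mul, mul_one] at h1
        rw [bb_cons, hBx₀, Zp_cons, zero_add] at h1
        have := (List.cons.injEq _ _ _ _).mp h1
        exact hH0 ((List.cons.injEq _ _ _ _).mp this.2 |>.1)
      · exfalso
        have h1 := hfix [H, x₀, 0] rfl
        rw [D8] at h1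
        simp only [cond_true, cond_false, one_mul] at h1
        rw [Equiv.Perm.mul_apply, Up_cons e H hHH, BSec_H e H hH0 heH, hHH,
          BSec_zero, hbx0, bb_cons, BSec_H e H hH0 heH] at h1
        have := (List.cons.injEq _ _ _ _).mp h1
        have h2 := (List.cons.injEq _ _ _ _).mp this.2
        exact hH0 ((List.cons.injEq _ _ _ _).mp h2.2 |>.1)
  · exfalso
    have h1 := hfix [0, 0, 0] rfl
    have hb2 : ggsB d e [0, 0] = [0, 0] := by rw [bb_cons, BSec_zero, bb_single]
    have hb3 : ggsB d e [0, 0, 0] = [0, 0, 0] := by rw [bb_cons, BSec_zero, hb2]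
    have hu3 : Up e H [0, 0, 0] = [0, 0, 0] := by
      rw [Up_cons e H hHH, BSec_zero, hb2, zero_add, BSec_H e H hH0 heH]
    have hX : ((cond j (ggsB d e) 1) * (cond k (Up e H) 1)) [0, 0, 0] = [0, 0, 0] := by
      cases j <;> cases k <;>
        simp only [cond_true, cond_false, one_mul, mul_one, Equiv.Perm.mul_apply,
          Equiv.Perm.one_apply, hb3, hu3]
    rw [D8, mul_assoc, Equiv.Perm.mul_apply, hX, cond_true, Zp_cons, zero_add] at h1
    exact hH0 ((List.cons.injEq _ _ _ _).mp h1 |>.1)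

include hH0 hHH he0 heH hR in
theorem claimB (p : ZMod d) (hp1 : e p = H) (hp2 : e (p + H) = 0) (i j k : Bool)
    (hfix : ∀ w : List (ZMod d), w.length = 2 → D8 e H i j k w = w) :
    D8 e H i j k = 1 := by
  have hp0 : p ≠ 0 := fun hc => hH0 (by rw [← hp1, hc, he0])
  have hpH2 : p + H + H = p := by rw [add_assoc, hHH, add_zero]
  cases i
  · cases j
    · cases k
      · exact D8_one e H
      · exfalso
        have h1 := hfix [p, 0] rfl
        rw [D8] at h1
        simp only [cond_true, cond_false, one_mul] at h1
        rw [Up_cons e H hHH, BSec_single e he0, zero_add, hp1,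
          BSec_single e he0, hp2, add_zero] at h1
        have := (List.cons.injEq _ _ _ _).mp h1
        exact hH0 ((List.cons.injEq _ _ _ _).mp this.2 |>.1)
    · cases k
      · exfalso
        have h1 := hfix [p, 0] rfl
        rw [D8] at h1
        simp only [cond_true, cond_false, one_mul, mul_one] at h1
        rw [bb_cons, BSec_single e he0, zero_add, hp1] at h1
        have := (List.cons.injEq _ _ _ _).mp h1
        exact hH0 ((List.cons.injEq _ _ _ _).mp this.2 |>.1)
      · exfalso
        have h1 := hfix [p + H, 0] rfl
        rw [D8] at h1
        simp only [cond_true, cond_false, one_mul] at h1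
        rw [Equiv.Perm.mul_apply, Up_cons e H hHH, BSec_single e he0, zero_add, hp2,
          hpH2, BSec_single e he0, hp1, zero_add, bb_cons, BSec_single e he0, hp2,
          add_zero] at h1
        have := (List.cons.injEq _ _ _ _).mp h1
        exact hH0 ((List.cons.injEq _ _ _ _).mp this.2 |>.1)
  · exfalso
    have h1 := hfix [0, 0] rfl
    have hb2 : ggsB d e [0, 0] = [0, 0] := by rw [bb_cons, BSec_zero, bb_single]
    have hu2 : Up e H [0, 0] = [0, 0] := by
      rw [Up_cons e H hHH, BSec_zero, bb_single, zero_add, BSec_H e H hH0 heH]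
    have hX : ((cond j (ggsB d e) 1) * (cond k (Up e H) 1)) [0, 0] = [0, 0] := by
      cases j <;> cases k <;>
        simp only [cond_true, cond_false, one_mul, mul_one, Equiv.Perm.mul_apply,
          Equiv.Perm.one_apply, hb2, hu2]
    rw [D8, mul_assoc, Equiv.Perm.mul_apply, hX, cond_true, Zp_cons, zero_add] at h1
    exact hH0 ((List.cons.injEq _ _ _ _).mp h1 |>.1)

/-! ### Level stabiliser triviality -/

include hH0 hHH he0 heH hR in
theorem stab_aux (x₀ : ZMod d) (hx₀ : e x₀ = H) (g : Equiv.Perm (List (ZMod d)))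
    (m : ℕ)
    (hclaim : ∀ i j k : Bool,
      (∀ w : List (ZMod d), w.length = m → D8 e H i j k w = w) → D8 e H i j k = 1)
    (hT : TP e H g) (hfix : ∀ w : List (ZMod d), w.length = m + 1 → g w = w) :
    g = 1 := by
  obtain ⟨hn, s, hs⟩ := hT
  have hs0 : s = 0 := by
    obtain ⟨f, _, hw⟩ := hs 0
    have h0 := hfix (0 :: List.replicate m 0) (by simp)
    rw [hw] at h0
    have := (List.cons.injEq _ _ _ _).mp h0
    rw [zero_add] at this
    exact this.1
  subst hs0
  have hsec1 : ∀ x w, g (x :: w) = x :: w := by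
    intro x
    obtain ⟨f, ⟨i, j, k, rfl⟩, hw⟩ := hs x
    have hf1 : D8 e H i j k = 1 := by
      apply hclaim
      intro w hwl
      have h4 := hfix (x :: w) (by rw [List.length_cons, hwl])
      rw [hw w] at h4
      exact ((List.cons.injEq _ _ _ _).mp h4).2
    intro w
    rw [hw w, hf1, Equiv.Perm.one_apply, add_zero]
  refine Equiv.ext fun w => ?_
  rw [Equiv.Perm.one_apply]
  cases w with
  | nil => exact hn
  | cons x t => exact hsec1 x t

/-! ### Infinite order element when `e H ≠ 0` -/

include hH0 hHH in
theorem xx_pow_ne_one (hEH : e H = H) :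
    ∀ m : ℕ, 0 < m → (ggsB d e * Zp H) ^ m ≠ 1 := by
  set xx := ggsB d e * Zp H with hxxdef
  have hxxw : ∀ w, xx w = ggsB d e (Zp H w) := fun w => rfl
  have hsingle : ∀ (j : ℕ) (y : ZMod d), (xx ^ j) [y] = [y + (j : ZMod d) * H] := by
    intro j
    induction j with
    | zero => intro y; simp
    | succ j ih =>
        intro y
        rw [pow_succ, Equiv.Perm.mul_apply, hxxw, Zp_cons, bb_single, ih]
        congr 1
        push_cast
        ring
  have hA : ∀ w, xx (0 :: w) = H :: Zp H w := by
    intro w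
    rw [hxxw, Zp_cons, zero_add, bb_cons]
    congr 1
    unfold BSec
    rw [if_neg hH0, hEH]
    rfl
  have hB : ∀ w, xx (H :: w) = 0 :: ggsB d e w := by
    intro w
    rw [hxxw, Zp_cons, hHH, bb_cons, BSec_zero]
  have hC : ∀ w, xx (xx (0 :: w)) = 0 :: xx w := by
    intro w
    rw [hA, hB, hxxw]
  have hD : ∀ (j : ℕ) w, ((xx * xx) ^ j) (0 :: w) = 0 :: (xx ^ j) w := by
    intro j
    induction j with
    | zero => intro w; simp
    | succ j ih =>
        intro w
        rw [pow_succ, Equiv.Perm.mul_apply, Equiv.Perm.mul_apply, hC, ih,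
          pow_succ, Equiv.Perm.mul_apply]
        rfl
  intro m
  induction m using Nat.strong_induction_on with
  | _ m IH =>
    intro hm0 h1
    rcases Nat.even_or_odd m with ⟨j, hj⟩ | ⟨j, hj⟩
    · have hj0 : 0 < j := by omega
      have hxj : xx ^ j = 1 := by
        refine Equiv.ext fun w => ?_
        have h2 : (xx ^ m) (0 :: w) = 0 :: w := by rw [h1]; rfl
        have hmm2 : xx ^ m = (xx * xx) ^ j := by
          rw [hj, pow_add, ← (Commute.refl xx).mul_pow]
        rw [hmm2, hD] at h2
        rw [Equiv.Perm.one_apply]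
        exact ((List.cons.injEq _ _ _ _).mp h2).2
      exact IH j (by omega) hj0 hxj
    · have h2 : (xx ^ m) [0] = [0] := by rw [h1]; rfl
      rw [hsingle] at h2
      have h3 : ((m : ℕ) : ZMod d) * H = H := by
        rw [hj]
        push_cast
        have h4 : (2 : ZMod d) * H = 0 := by rw [two_mul, hHH]
        calc ((2 : ZMod d) * (j : ZMod d) + 1) * H
            = (j : ZMod d) * ((2 : ZMod d) * H) + H := by ring
          _ = H := by rw [h4, mul_zero, zero_add]
      rw [h3, zero_add] at h2
      exact hH0 ((List.cons.injEq _ _ _ _).mp h2).1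

/-! ### A nontrivial element of the third level stabiliser (symmetric case) -/

include hHH hR in
theorem e_self_add (x : ZMod d) : e x + e x = 0 := by
  rcases hR x with h | h
  · rw [h, add_zero]
  · rw [h, hHH]

include hH0 hHH he0 heH hR in
theorem BB2 (hsymm : ∀ x, e (x + H) = e x) (p q : ZMod d) :
    BSec e p (BSec e (p + H) [q]) = [q] := by
  by_cases hp0 : p = 0
  · rw [hp0, zero_add, BSec_H e H hH0 heH, BSec_zero, bb_single]
  · by_cases hpH : p = H
    · rw [hpH, hHH, BSec_zero, bb_single, BSec_H e H hH0 heH]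
    · have hpH0 : p + H ≠ 0 := by
        intro hc
        apply hpH
        rw [eq_neg_of_add_eq_zero_left hc, neg_H' hHH]
      rw [BSec_single e he0, BSec_single e he0, hsymm p, add_assoc,
        e_self_add e H hHH hR, add_zero]
  
include hH0 hHH he0 heH hR in
theorem sym_exists (x₀ : ZMod d) (hx₀ : e x₀ = H) (hsymm : ∀ x, e (x + H) = e x) :
    ∃ g ∈ ggsGroup d e, (∀ w : List (ZMod d), w.length = 3 → g w = w) ∧
      g [0, 0, x₀, 0] = [0, 0, x₀, H] := by
  have hx₀0 : x₀ ≠ 0 := fun hc => hH0 (by rw [← hx₀, hc, he0])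
  have hBx₀ : ∀ v, BSec e x₀ v = Zp H v := fun v => by
    unfold BSec; rw [if_neg hx₀0, hx₀]; rfl
  set t : ZMod d := -x₀ with ht
  have ht0 : t ≠ 0 := neg_ne_zero.mpr hx₀0
  have hmt : 0 - t = x₀ := by rw [ht, zero_sub, neg_neg]
  set c : Equiv.Perm (List (ZMod d)) :=
    ggsA d ^ t.val * ggsB d e * (ggsA d ^ t.val)⁻¹ with hc
  set g : Equiv.Perm (List (ZMod d)) := ggsB d e * c * ggsB d e * c with hgdef
  have hAmem : ggsA d ∈ ggsGroup d e := Subgroup.subset_closure (Set.mem_insert _ _)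
  have hBmem : ggsB d e ∈ ggsGroup d e :=
    Subgroup.subset_closure (Set.mem_insert_of_mem _ rfl)
  have hcmem : c ∈ ggsGroup d e :=
    mul_mem (mul_mem (pow_mem hAmem _) hBmem) (inv_mem (pow_mem hAmem _))
  have hgmem : g ∈ ggsGroup d e := mul_mem (mul_mem (mul_mem hBmem hcmem) hBmem) hcmem
  have hccons : ∀ (x : ZMod d) w, c (x :: w) = x :: BSec e (x - t) w := by
    intro x w
    have hinv : ((ggsA d ^ t.val)⁻¹) (x :: w) = (x - t) :: w := by
      rw [Equiv.Perm.inv_eq_iff_eq, apow_cons, natCast_val_eq, sub_add_cancel]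
    rw [hc, Equiv.Perm.mul_apply, Equiv.Perm.mul_apply, hinv, bb_cons, apow_cons,
      natCast_val_eq, sub_add_cancel]
  have hgcons : ∀ (x : ZMod d) w,
      g (x :: w) = x :: BSec e x (BSec e (x - t) (BSec e x (BSec e (x - t) w))) := by
    intro x w
    rw [hgdef, Equiv.Perm.mul_apply, Equiv.Perm.mul_apply, Equiv.Perm.mul_apply,
      hccons, bb_cons, hccons, bb_cons]
  have hBB2' : ∀ p q : ZMod d, BSec e (p + H) (BSec e p [q]) = [q] := by
    intro p q
    have h := BB2 e H hH0 hHH he0 heH hR hsymm (p + H) q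
    rwa [add_assoc, hHH, add_zero] at h
  have core2 : ∀ y p q : ZMod d,
      BSec e y (BSec e (y - t) (BSec e y (BSec e (y - t) [p, q]))) = [p, q] := by
    intro y p q
    by_cases hy0 : y = 0
    · subst hy0
      rw [hmt]
      simp only [BSec_zero, hBx₀]
      have s1 : Zp H [p, q] = [p + H, q] := Zp_cons H p [q]
      have s2 : ggsB d e [p + H, q] = (p + H) :: BSec e (p + H) [q] := bb_cons e (p + H) [q]
      have s3 : Zp H ((p + H) :: BSec e (p + H) [q]) = p :: BSec e (p + H) [q] := by
        rw [Zp_cons, add_assoc, hHH, add_zero]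
      have s4 : ggsB d e (p :: BSec e (p + H) [q]) =
          p :: BSec e p (BSec e (p + H) [q]) := bb_cons e p _
      rw [s1, s2, s3, s4, BB2 e H hH0 hHH he0 heH hR hsymm]
    · by_cases hyt : y = t
      · rw [hyt, sub_self]
        simp only [BSec_zero]
        rcases hR t with het | het
        · have hBt : ∀ v, BSec e t v = v := fun v => by
            unfold BSec
            rw [if_neg ht0, het, ZMod.val_zero, pow_zero, Equiv.Perm.one_apply]
          simp only [hBt]
          exact bb_invol e H hHH hR [p, q]
        · have hBt : ∀ v, BSec e t v = Zp H v := fun v => by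
            unfold BSec; rw [if_neg ht0, het]; rfl
          simp only [hBt]
          have s1 : ggsB d e [p, q] = p :: BSec e p [q] := bb_cons e p [q]
          have s2 : Zp H (p :: BSec e p [q]) = (p + H) :: BSec e p [q] := Zp_cons H p _
          have s3 : ggsB d e ((p + H) :: BSec e p [q]) =
              (p + H) :: BSec e (p + H) (BSec e p [q]) := bb_cons e (p + H) _
          rw [s1, s2, s3, hBB2', Zp_cons, add_assoc, hHH, add_zero]
      · have hyt0 : y - t ≠ 0 := sub_ne_zero.mpr hyt
        have hc1 : ∀ (v : ZMod d) w, BSec e (y - t) (v :: w) = (v + e (y - t)) :: w :=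
          fun v w => by unfold BSec; rw [if_neg hyt0, apow_cons, natCast_val_eq]
        have hc2 : ∀ (v : ZMod d) w, BSec e y (v :: w) = (v + e y) :: w :=
          fun v w => by unfold BSec; rw [if_neg hy0, apow_cons, natCast_val_eq]
        rw [hc1, hc2, hc1, hc2]
        have hsum : p + e (y - t) + e y + e (y - t) + e y = p := by
          linear_combination e_self_add e H hHH hR (y - t) + e_self_add e H hHH hR y
        rw [hsum]
  refine ⟨g, hgmem, ?_, ?_⟩
  · intro w hw
    match w, hw with
    | [y, p, q], _ => rw [hgcons, core2]
  · rw [hgcons, hmt]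
    simp only [BSec_zero, hBx₀]
    have s1 : Zp H [0, x₀, 0] = [H, x₀, 0] := by rw [Zp_cons H 0 [x₀, 0], zero_add]
    have s2 : ggsB d e [H, x₀, 0] = [H, x₀, 0] := by
      rw [bb_cons, BSec_H e H hH0 heH]
    have s3 : Zp H [H, x₀, 0] = [0, x₀, 0] := by rw [Zp_cons H H [x₀, 0], hHH]
    have s4 : ggsB d e [0, x₀, 0] = [0, x₀, H] := by
      rw [bb_cons, BSec_zero, bb_cons, BSec_single e he0, zero_add, hx₀]
    rw [s1, s2, s3, s4]

end WithH

end GGSAux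

set_option linter.unusedSectionVars false in
/-- Let `G` be a periodic GGS-group on the `2^n`-adic tree (`n ≥ 2`) with
`R₀ = n - 1`, i.e. every entry of the defining vector is `0` or `2^{n-1}`.
Then `St_G(4)` is trivial, and `St_G(3)` is nontrivial iff
`e_i = e_{2^{n-1}+i}` for all `i ∈ {1, …, 2^{n-1}-1}`. -/
theorem ggs_two_group_level_stabilisers (n : ℕ) (hn : 2 ≤ n)
    (e : ZMod (2 ^ n) → ZMod (2 ^ n)) (he0 : e 0 = 0) (hne : ∃ i, e i ≠ 0)
    (hR0 : ∀ i, e i = 0 ∨ e i = ((2 ^ (n - 1) : ℕ) : ZMod (2 ^ n)))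
    (hper : ∀ g : ggsGroup (2 ^ n) e, IsOfFinOrder g) :
    levelStab (ggsGroup (2 ^ n) e) 4 = ⊥ ∧
      (levelStab (ggsGroup (2 ^ n) e) 3 ≠ ⊥ ↔
        ∀ i : ZMod (2 ^ n), 1 ≤ i.val → i.val ≤ 2 ^ (n - 1) - 1 →
          e i = e (((2 ^ (n - 1) : ℕ) : ZMod (2 ^ n)) + i)) := by
  have hd0 : (2 : ℕ) ^ n ≠ 0 := pow_ne_zero n two_ne_zero
  haveI : NeZero (2 ^ n) := ⟨hd0⟩
  set H : ZMod (2 ^ n) := ((2 ^ (n - 1) : ℕ) : ZMod (2 ^ n)) with hHdef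
  have hlt : 2 ^ (n - 1) < 2 ^ n := Nat.pow_lt_pow_right one_lt_two (by omega)
  have hval : H.val = 2 ^ (n - 1) := by rw [hHdef]; exact ZMod.val_cast_of_lt hlt
  have hH0 : H ≠ 0 := by
    intro hc
    rw [hc, ZMod.val_zero] at hval
    exact (Nat.two_pow_pos (n - 1)).ne' hval.symm
  have hdd : 2 ^ (n - 1) + 2 ^ (n - 1) = 2 ^ n := by
    have h := pow_succ 2 (n - 1)
    have hnn : n - 1 + 1 = n := by omega
    rw [hnn] at h
    omega
  have hHH : H + H = 0 := by rw [hHdef, ← Nat.cast_add, hdd, ZMod.natCast_self]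
  have hRH : ∀ x, e x = 0 ∨ e x = H := fun x => by
    rcases hR0 x with h | h
    · exact Or.inl h
    · exact Or.inr (by rw [h, hHdef])
  -- periodicity forces `e H = 0`
  have heH : e H = 0 := by
    rcases hRH H with h | h
    · exact h
    · exfalso
      have hmem : ggsB (2 ^ n) e * Zp H ∈ ggsGroup (2 ^ n) e :=
        mul_mem (Subgroup.subset_closure (Set.mem_insert_of_mem _ rfl))
          (pow_mem (Subgroup.subset_closure (Set.mem_insert _ _)) _)
      have hfo := hper ⟨_, hmem⟩
      obtain ⟨m, hm0, hm1⟩ := isOfFinOrder_iff_pow_eq_one.mp hfo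
      have hm2 : (ggsB (2 ^ n) e * Zp H) ^ m = 1 := by
        have h2 := congrArg (Subtype.val) hm1
        rw [SubmonoidClass.coe_pow] at h2
        exact h2
      exact xx_pow_ne_one e H hH0 hHH h m hm0 hm2
  obtain ⟨x₀, hx₀'⟩ := hne
  have hx₀ : e x₀ = H := by
    rcases hRH x₀ with h | h
    · exact absurd h hx₀'
    · exact h
  have hle := ggs_le_Tgrp e H hH0 hHH he0 heH hRH
  constructor
  · apply (Subgroup.eq_bot_iff_forall _).mpr
    intro g hg
    have hg1 : (g : Equiv.Perm (List (ZMod (2 ^ n)))) = 1 :=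
      stab_aux e H hH0 hHH he0 heH hRH x₀ hx₀ _ 3
        (fun i j k hf => claimA e H hH0 hHH he0 heH hRH x₀ hx₀ i j k hf)
        (hle g.2) (fun w hw => hg w hw)
    exact Subtype.ext hg1
  · constructor
    · intro hne3
      by_contra hcond
      push_neg at hcond
      obtain ⟨i, hi1, hi2, hie⟩ := hcond
      apply hne3
      apply (Subgroup.eq_bot_iff_forall _).mpr
      intro g hg
      have hxi : e i ≠ e (i + H) := by rw [add_comm i H]; exact hie
      have hp : ∃ p, e p = H ∧ e (p + H) = 0 := by
        rcases hRH i with h1 | h1 <;> rcases hRH (i + H) with h2 | h2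
        · exact absurd (h1.trans h2.symm) hxi
        · exact ⟨i + H, h2, by rw [add_assoc, hHH, add_zero]; exact h1⟩
        · exact ⟨i, h1, h2⟩
        · exact absurd (h1.trans h2.symm) hxi
      obtain ⟨p, hp1, hp2⟩ := hp
      have hg1 : (g : Equiv.Perm (List (ZMod (2 ^ n)))) = 1 :=
        stab_aux e H hH0 hHH he0 heH hRH x₀ hx₀ _ 2
          (fun i' j' k' hf => claimB e H hH0 hHH he0 heH hRH p hp1 hp2 i' j' k' hf)
          (hle g.2) (fun w hw => hg w hw)
      exact Subtype.ext hg1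
    · intro hrange
      have hsymm : ∀ x, e (x + H) = e x := by
        intro x
        have hxval : x.val < 2 ^ n := ZMod.val_lt x
        have hcast : ((x.val : ℕ) : ZMod (2 ^ n)) = x := natCast_val_eq x
        rcases lt_trichotomy x.val (2 ^ (n - 1)) with hv | hv | hv
        · by_cases hv0 : x.val = 0
          · have hx0 : x = 0 := by rw [← hcast, hv0, Nat.cast_zero]
            rw [hx0, zero_add, heH, he0]
          · have h1 := hrange x (by omega) (by omega)
            rw [add_comm x H]
            exact h1.symm
        · have hxH : x = H := by rw [← hcast, hv, hHdef]
          rw [hxH, hHH, he0, heH]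
        · set i : ZMod (2 ^ n) := ((x.val - 2 ^ (n - 1) : ℕ) : ZMod (2 ^ n)) with hidef
          have hival : i.val = x.val - 2 ^ (n - 1) := by
            rw [hidef]; exact ZMod.val_cast_of_lt (by omega)
          have hxi : x = H + i := by
            rw [← hcast, hHdef, hidef, ← Nat.cast_add]
            congr 1
            omega
          have h1 : e i = e (H + i) :=
            hrange i (by rw [hival]; omega) (by rw [hival]; omega)
          have h2 : x + H = i := by rw [hxi, add_comm H i, add_assoc, hHH, add_zero]
          rw [h2, hxi]
          exact h1
      obtain ⟨g, hgmem, hgfix, hgval⟩ :=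
        sym_exists e H hH0 hHH he0 heH hRH x₀ hx₀ hsymm
      intro hbot
      have hmem3 : (⟨g, hgmem⟩ : ggsGroup (2 ^ n) e) ∈ levelStab (ggsGroup (2 ^ n) e) 3 :=
        fun w hw => hgfix w hw
      rw [hbot] at hmem3
      have hg1 : g = 1 := congrArg Subtype.val (Subgroup.mem_bot.mp hmem3)
      rw [hg1, Equiv.Perm.one_apply] at hgval
      simp only [List.cons.injEq] at hgval
      exact hH0 hgval.2.2.2.1.symm
end
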